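/- (Proposition: terminal comparison at an intermediate deadline T_k.) Let u : 𝒮̄ → ℝ be upper semicontinuous such that for every x ∈ 𝒮: u(x) ≤ inf_{0≤θ≤x₀}[ w_k(G_k − θ)⁺ + f(x₀ − θ, x₁) ] and u(x) ≤ M[u]^*(x). Let v : 𝒮̄ → ℝ be lower semicontinuous such that for every x ∈ 𝒮: v(x) ≥ inf_{0≤θ≤x₀}[ w_k(G_k − θ)⁺ + f(x₀ − θ, x₁) ] or v(x) ≥ M[v]_*(x). Assume u((0,0)) ≤ v((0,0)), v((0,0)) = Σ_{i=k}^K w_i G_i, and for all x ∈ 𝒮̄: 0 ≤ u(x) ≤ Σ_{i=k}^K w_i G_i and −c(1 + |x|^{p₀}) ≤ v(x) ≤ Σ_{i=k}^K w_i G_i. Then u(x) ≤ v(x) for all x ∈ 𝒮̄. -/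

import Mathlib

open Set Filter

/-- The closed positive quadrant of portfolio positions. -/
def Sbar : Set (ℝ × ℝ) := Set.Ici 0 ×ˢ Set.Ici 0

/-- The positive quadrant without the origin. -/
def Sset : Set (ℝ × ℝ) := Sbar \ {(0, 0)}

/-- A transaction cost function. -/
def IsCostFn (C : ℝ → ℝ) : Prop :=
  Continuous C ∧ (∀ d₁ d₂ : ℝ, |d₁| ≤ |d₂| → C d₁ ≤ C d₂) ∧ 0 < C 0 ∧
    StrictMono (fun d => d + C d) ∧ Set.Ici (0 : ℝ) ⊆ Set.range (fun d => d + C d)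

/-- The rebalancing map. -/
def Gam (C : ℝ → ℝ) (x : ℝ × ℝ) (d : ℝ) : ℝ × ℝ := (x.1 - d - C d, x.2 + d)

/-- The set of feasible transactions. -/
def Dset (C : ℝ → ℝ) (x : ℝ × ℝ) : Set ℝ := {d | Gam C x d ∈ Sbar}

/-- The intervention operator, with value `+∞` if no transaction is feasible. -/
noncomputable def Mop (C : ℝ → ℝ) (g : ℝ × ℝ → ℝ) (x : ℝ × ℝ) : EReal :=
  ⨅ d ∈ Dset C x, ((g (Gam C x d) : ℝ) : EReal)

/-- Upper semicontinuous envelope of `h` computed on `E`. -/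
noncomputable def uscEnv {α : Type*} [TopologicalSpace α]
    (h : α → EReal) (E : Set α) (z : α) : EReal :=
  Filter.limsup h (nhdsWithin z E)

/-- Lower semicontinuous envelope of `h` computed on `E`. -/
noncomputable def lscEnv {α : Type*} [TopologicalSpace α]
    (h : α → EReal) (E : Set α) (z : α) : EReal :=
  Filter.liminf h (nhdsWithin z E)

/-- Euclidean norm on `ℝ²`. -/
noncomputable def eunorm (p : ℝ × ℝ) : ℝ := Real.sqrt (p.1 ^ 2 + p.2 ^ 2)

open Topology

lemma mem_Sbar {x : ℝ × ℝ} : x ∈ Sbar ↔ 0 ≤ x.1 ∧ 0 ≤ x.2 := by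
  simp [Sbar, Set.mem_prod, Prod.le_def]

lemma isClosed_Sbar : IsClosed Sbar := isClosed_Ici.prod isClosed_Ici

/-- usc along a sequence -/
lemma usc_seq {g : ℝ × ℝ → ℝ} (hg : UpperSemicontinuousOn g Sbar)
    {z : ℝ × ℝ} (hz : z ∈ Sbar) {zs : ℕ → ℝ × ℝ} (hmem : ∀ n, zs n ∈ Sbar)
    (htend : Tendsto zs atTop (𝓝 z)) {m : ℝ} (hm : ∀ n, m ≤ g (zs n)) :
    m ≤ g z := by
  by_contra h
  push_neg at h
  have h2 := hg z hz m h
  have htw : Tendsto zs atTop (𝓝[Sbar] z) :=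
    tendsto_nhdsWithin_of_tendsto_nhds_of_eventually_within _ htend
      (Eventually.of_forall hmem)
  obtain ⟨n, hn⟩ := (htw.eventually h2).exists
  exact absurd (hm n) (not_le.mpr hn)

/-- lsc along a sequence -/
lemma lsc_seq {g : ℝ × ℝ → ℝ} (hg : LowerSemicontinuousOn g Sbar)
    {z : ℝ × ℝ} (hz : z ∈ Sbar) {zs : ℕ → ℝ × ℝ} (hmem : ∀ n, zs n ∈ Sbar)
    (htend : Tendsto zs atTop (𝓝 z)) {m : ℝ} (hm : ∀ n, g (zs n) ≤ m) :
    g z ≤ m := by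
  by_contra h
  push_neg at h
  have h2 := hg z hz m h
  have htw : Tendsto zs atTop (𝓝[Sbar] z) :=
    tendsto_nhdsWithin_of_tendsto_nhds_of_eventually_within _ htend
      (Eventually.of_forall hmem)
  obtain ⟨n, hn⟩ := (htw.eventually h2).exists
  exact absurd (hm n) (not_le.mpr hn)

/-- an usc function attains its max on a nonempty compact set -/
lemma usc_max_on_compact {K : Set (ℝ × ℝ)} (hK : IsCompact K) (hne : K.Nonempty)
    {φ : ℝ × ℝ → ℝ} (hφ : UpperSemicontinuousOn φ K) :
    ∃ x ∈ K, ∀ y ∈ K, φ y ≤ φ x := by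
  by_contra h
  push_neg at h
  choose Y hYK hYlt using h
  have hU : ∀ x (hx : x ∈ K), ∃ t, t ∈ 𝓝 x ∧ ∀ w ∈ t, w ∈ K → φ w < φ (Y x hx) := by
    intro x hx
    have h1 := hφ x hx (φ (Y x hx)) (hYlt x hx)
    rw [eventually_nhdsWithin_iff] at h1
    obtain ⟨t, ht, hsub⟩ := eventually_iff_exists_mem.mp h1
    exact ⟨t, ht, hsub⟩
  choose t ht hts using hU
  obtain ⟨s, hcover⟩ := hK.elim_nhds_subcover' t ht
  obtain ⟨x₀, hx₀⟩ := hne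
  have hx₀' := hcover hx₀
  rw [Set.mem_iUnion₂] at hx₀'
  obtain ⟨i, hi, _⟩ := hx₀'
  obtain ⟨j, hj, hjmax⟩ := s.exists_max_image (fun i => φ (Y i.1 i.2)) ⟨i, hi⟩
  have hYj : Y j.1 j.2 ∈ K := hYK j.1 j.2
  have := hcover hYj
  rw [Set.mem_iUnion₂] at this
  obtain ⟨i', hi', hmem⟩ := this
  have h1 : φ (Y j.1 j.2) < φ (Y i'.1 i'.2) := hts i'.1 i'.2 _ hmem hYj
  have h2 : φ (Y i'.1 i'.2) ≤ φ (Y j.1 j.2) := hjmax i' hi'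
  linarith

/-- Key consequence of the subsolution intervention inequality: if the feasible
interval at `x̂` has nonempty interior, then `u x̂ ≤ u (Γ(x̂, d̂))` for every
feasible `d̂`. -/
lemma keyU (C : ℝ → ℝ) (hC : IsCostFn C) (u : ℝ × ℝ → ℝ)
    (hu_usc : UpperSemicontinuousOn u Sbar)
    (xh : ℝ × ℝ)
    (hsub : (u xh : EReal) ≤ uscEnv (Mop C u) Sbar xh)
    (b : ℝ) (hb : b + C b = xh.1) (hab : -xh.2 < b)
    (dh : ℝ) (hd1 : -xh.2 ≤ dh) (hd2 : dh + C dh ≤ xh.1) :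
    u xh ≤ u (Gam C xh dh) := by
  obtain ⟨hCc, hCmono, hC0, hmono, hrange⟩ := hC
  -- Step 1 : interior transactions
  have step1 : ∀ e : ℝ, -xh.2 < e → e < b → u xh ≤ u (Gam C xh e) := by
    intro e he1 he2
    have heC : e + C e < xh.1 := by
      have := hmono he2
      simp only at this
      linarith
    have hz'S : Gam C xh e ∈ Sbar := by
      rw [Gam, mem_Sbar]
      constructor
      · simp only; linarith
      · simp only; linarith
    set z' := Gam C xh e with hz'
    refine le_of_forall_pos_le_add ?_
    intro δ' hδ'
    have husc := hu_usc z' hz'S (u z' + δ') (by linarith)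
    rw [eventually_nhdsWithin_iff] at husc
    have hTcont : Continuous (fun x' : ℝ × ℝ => Gam C x' e) := by
      unfold Gam
      exact ((continuous_fst.sub continuous_const).sub continuous_const).prodMk
        (continuous_snd.add continuous_const)
    have hT : Tendsto (fun x' : ℝ × ℝ => Gam C x' e) (𝓝 xh) (𝓝 z') := hTcont.tendsto xh
    have hev2 : ∀ᶠ x' in 𝓝 xh, (Gam C x' e ∈ Sbar → u (Gam C x' e) < u z' + δ') :=
      hT.eventually husc
    have hev3 : ∀ᶠ x' in 𝓝 xh, -x'.2 < e :=
      Tendsto.eventually_lt_const he1 ((continuous_snd.neg).tendsto xh)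
    have hev4 : ∀ᶠ x' in 𝓝 xh, e + C e < x'.1 :=
      Tendsto.eventually_const_lt heC (continuous_fst.tendsto xh)
    have hev : ∀ᶠ x' in 𝓝[Sbar] xh, Mop C u x' ≤ ((u z' + δ' : ℝ) : EReal) := by
      have hall : ∀ᶠ x' in 𝓝[Sbar] xh,
        ((Gam C x' e ∈ Sbar → u (Gam C x' e) < u z' + δ') ∧ (-x'.2 < e ∧ e + C e < x'.1))
          ∧ x' ∈ Sbar :=
      (((hev2.and (hev3.and hev4)).filter_mono nhdsWithin_le_nhds).and
        eventually_mem_nhdsWithin)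
      refine hall.mono ?_
      rintro x' ⟨⟨himp, h3, h4⟩, hx'S⟩
      have hx'm := mem_Sbar.mp hx'S
      have hmemD : e ∈ Dset C x' := by
        show Gam C x' e ∈ Sbar
        rw [Gam, mem_Sbar]
        constructor
        · simp only; linarith
        · simp only; linarith
      have hle : Mop C u x' ≤ ((u (Gam C x' e) : ℝ) : EReal) := by
        rw [Mop]; exact iInf₂_le e hmemD
      refine hle.trans ?_
      rw [EReal.coe_le_coe_iff]
      exact (himp hmemD).le
    have hfin : uscEnv (Mop C u) Sbar xh ≤ ((u z' + δ' : ℝ) : EReal) := by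
      rw [uscEnv, limsup_eq]
      exact sInf_le hev
    have h := hsub.trans hfin
    rw [EReal.coe_le_coe_iff] at h
    exact h
  -- Step 2 : pass to the boundary
  have hdb : dh ≤ b := by
    rw [← hmono.le_iff_le]
    show dh + C dh ≤ b + C b
    linarith
  set m : ℝ := (-xh.2 + b) / 2 with hm
  have hm1 : -xh.2 < m := by rw [hm]; linarith
  have hm2 : m < b := by rw [hm]; linarith
  set pt : ℕ → ℝ := fun j => dh + (1 / ((j : ℝ) + 2)) * (m - dh) with hpt
  have hs : ∀ j : ℕ, 0 < (1 : ℝ) / ((j : ℝ) + 2) ∧ (1 : ℝ) / ((j : ℝ) + 2) ≤ 1 := by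
    intro j
    constructor
    · positivity
    · rw [div_le_one (by positivity)]
      have : (0 : ℝ) ≤ (j : ℝ) := Nat.cast_nonneg j
      linarith
  have hpt1 : ∀ j, -xh.2 < pt j := by
    intro j
    obtain ⟨hs1, hs2⟩ := hs j
    have e1 : 0 ≤ (1 - 1 / ((j : ℝ) + 2)) * (dh + xh.2) :=
      mul_nonneg (by linarith) (by linarith)
    have e2 : 0 < (1 / ((j : ℝ) + 2)) * (m + xh.2) := mul_pos hs1 (by linarith)
    simp only [hpt]
    nlinarith
  have hpt2 : ∀ j, pt j < b := by
    intro j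
    obtain ⟨hs1, hs2⟩ := hs j
    have e1 : 0 ≤ (1 - 1 / ((j : ℝ) + 2)) * (b - dh) :=
      mul_nonneg (by linarith) (by linarith)
    have e2 : 0 < (1 / ((j : ℝ) + 2)) * (b - m) := mul_pos hs1 (by linarith)
    simp only [hpt]
    nlinarith
  have hptd : ∀ j, u xh ≤ u (Gam C xh (pt j)) := fun j => step1 (pt j) (hpt1 j) (hpt2 j)
  have hstend : Tendsto (fun j : ℕ => (1 : ℝ) / ((j : ℝ) + 2)) atTop (𝓝 0) := by
    have h1 : Tendsto (fun j : ℕ => ((j : ℝ) + 2)) atTop atTop :=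
      tendsto_atTop_add_const_right atTop 2 tendsto_natCast_atTop_atTop
    have h2 := h1.inv_tendsto_atTop
    simp only [one_div]
    exact h2
  have hpttend : Tendsto pt atTop (𝓝 dh) := by
    have := (hstend.mul_const (m - dh)).const_add dh
    simpa [hpt] using this
  have hgam : Tendsto (fun j => Gam C xh (pt j)) atTop (𝓝 (Gam C xh dh)) := by
    unfold Gam
    exact Tendsto.prodMk_nhds
      ((tendsto_const_nhds.sub hpttend).sub ((hCc.tendsto dh).comp hpttend))
      (tendsto_const_nhds.add hpttend)
  have hmemj : ∀ j, Gam C xh (pt j) ∈ Sbar := by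
    intro j
    have h1 : pt j + C (pt j) < xh.1 := by
      have := hmono (hpt2 j)
      simp only at this
      linarith
    rw [Gam, mem_Sbar]
    constructor
    · simp only; linarith
    · simp only; linarith [hpt1 j]
  have hzS : Gam C xh dh ∈ Sbar := by
    rw [Gam, mem_Sbar]
    constructor
    · simp only; linarith
    · simp only; linarith
  exact usc_seq hu_usc hzS hmemj hgam hptd

/-- Comparison with an `ε`-margin. -/
lemma comparison_eps
    (C : ℝ → ℝ) (hC : IsCostFn C)
    (Sinf : ℝ × ℝ → ℝ)
    (u v : ℝ × ℝ → ℝ)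
    (hu_usc : UpperSemicontinuousOn u Sbar)
    (hv_lsc : LowerSemicontinuousOn v Sbar)
    (hu_sub : ∀ x ∈ Sset, u x ≤ Sinf x ∧ (u x : EReal) ≤ uscEnv (Mop C u) Sbar x)
    (hv_super : ∀ x ∈ Sset, Sinf x ≤ v x ∨ lscEnv (Mop C v) Sbar x ≤ (v x : EReal))
    (hu0 : u (0, 0) ≤ v (0, 0))
    (hB : ∀ x ∈ Sbar, u x ≤ v (0, 0))
    (ε : ℝ) (hε : 0 < ε) :
    ∀ x ∈ Sbar, u x - v x ≤ ε * (x.1 + x.2) := by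
  intro x₀ hx₀
  have hx₀m := mem_Sbar.mp hx₀
  have hR0 : 0 ≤ x₀.1 + x₀.2 := add_nonneg hx₀m.1 hx₀m.2
  have hKclosed : IsClosed (Sbar ∩ {p : ℝ × ℝ | p.1 + p.2 ≤ x₀.1 + x₀.2}) :=
    isClosed_Sbar.inter (isClosed_le (continuous_fst.add continuous_snd) continuous_const)
  have hKsub : (Sbar ∩ {p : ℝ × ℝ | p.1 + p.2 ≤ x₀.1 + x₀.2}) ⊆ Sbar := inter_subset_left
  have hKcompact : IsCompact (Sbar ∩ {p : ℝ × ℝ | p.1 + p.2 ≤ x₀.1 + x₀.2}) := by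
    refine (isCompact_Icc (a := ((0 : ℝ), (0 : ℝ)))
      (b := (x₀.1 + x₀.2, x₀.1 + x₀.2))).of_isClosed_subset hKclosed ?_
    rintro p ⟨hpS, hple⟩
    rw [mem_Sbar] at hpS
    simp only [mem_setOf_eq] at hple
    rw [Set.mem_Icc]
    exact ⟨⟨hpS.1, hpS.2⟩, ⟨show p.1 ≤ x₀.1 + x₀.2 by linarith,
      show p.2 ≤ x₀.1 + x₀.2 by linarith⟩⟩
  have hne : (Sbar ∩ {p : ℝ × ℝ | p.1 + p.2 ≤ x₀.1 + x₀.2}).Nonempty :=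
    ⟨(0, 0), by rw [mem_Sbar]; simp, by simp [hR0]⟩
  have hφusc : UpperSemicontinuousOn (fun p : ℝ × ℝ => u p - v p - ε * (p.1 + p.2))
      (Sbar ∩ {p : ℝ × ℝ | p.1 + p.2 ≤ x₀.1 + x₀.2}) := by
    intro z hz y hy
    replace hy : u z - v z - ε * (z.1 + z.2) < y := hy
    have hzS : z ∈ Sbar := hKsub hz
    obtain ⟨η, hηpos, hηeq⟩ : ∃ η : ℝ, 0 < η ∧ u z - v z - ε * (z.1 + z.2) + 3 * η = y :=
      ⟨(y - (u z - v z - ε * (z.1 + z.2))) / 3, by linarith, by ring⟩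
    have h1 : ∀ᶠ w in 𝓝[Sbar] z, u w < u z + η := hu_usc z hzS _ (by linarith)
    have h2 : ∀ᶠ w in 𝓝[Sbar] z, v z - η < v w := hv_lsc z hzS _ (by linarith)
    have htt : Tendsto (fun w : ℝ × ℝ => ε * (w.1 + w.2)) (𝓝 z) (𝓝 (ε * (z.1 + z.2))) :=
      (continuous_const.mul (continuous_fst.add continuous_snd)).tendsto z
    have h3 : ∀ᶠ w in 𝓝 z, ε * (z.1 + z.2) - η < ε * (w.1 + w.2) :=
      Tendsto.eventually_const_lt (show ε * (z.1 + z.2) - η < ε * (z.1 + z.2) by linarith) htt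
    have hall : ∀ᶠ w in 𝓝[Sbar ∩ {p : ℝ × ℝ | p.1 + p.2 ≤ x₀.1 + x₀.2}] z,
        (u w < u z + η ∧ v z - η < v w) ∧ ε * (z.1 + z.2) - η < ε * (w.1 + w.2) :=
      ((h1.and h2).filter_mono (nhdsWithin_mono z hKsub)).and
        (h3.filter_mono nhdsWithin_le_nhds)
    refine hall.mono ?_
    rintro w ⟨⟨hw1, hw2⟩, hw3⟩
    show u w - v w - ε * (w.1 + w.2) < y
    linarith
  obtain ⟨xh, hxhK, hxhmax⟩ := usc_max_on_compact hKcompact hne hφusc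
  have hxhS : xh ∈ Sbar := hKsub hxhK
  have hxhm := mem_Sbar.mp hxhS
  have hxhR : xh.1 + xh.2 ≤ x₀.1 + x₀.2 := hxhK.2
  have hmaxb : ∀ p ∈ (Sbar ∩ {p : ℝ × ℝ | p.1 + p.2 ≤ x₀.1 + x₀.2}),
      u p - v p - ε * (p.1 + p.2) ≤ u xh - v xh - ε * (xh.1 + xh.2) := hxhmax
  -- main claim : the max value is ≤ 0
  have hclaim : u xh - v xh - ε * (xh.1 + xh.2) ≤ 0 := by
    by_contra hposc
    push_neg at hposc
    by_cases hxh0 : xh = (0, 0)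
    · rw [hxh0] at hposc
      replace hposc : 0 < u (0, 0) - v (0, 0) - ε * (0 + 0) := hposc
      have h0 : ε * ((0 : ℝ) + 0) = 0 := by ring
      linarith
    · have hxhSset : xh ∈ Sset := ⟨hxhS, by simpa using hxh0⟩
      rcases hv_super xh hxhSset with hA | hB2
      · have h1 := (hu_sub xh hxhSset).1
        have huv : u xh ≤ v xh := h1.trans hA
        have h2 : 0 ≤ ε * (xh.1 + xh.2) := mul_nonneg hε.le (by linarith)
        linarith
      · -- intervention case
        obtain ⟨hCc, hCmono, hC0, hmono, hrange⟩ := hC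
        obtain ⟨b, hb⟩ : ∃ b, b + C b = xh.1 := hrange (mem_Ici.mpr hxhm.1)
        obtain ⟨δ, hδpos, hδeq⟩ : ∃ δ : ℝ, 0 < δ ∧ 2 * δ = ε * C 0 :=
          ⟨ε * C 0 / 2, by positivity, by ring⟩
        have hfreq : ∃ᶠ y in 𝓝[Sbar] xh, Mop C v y < ((v xh + δ : ℝ) : EReal) := by
          by_contra hcon
          rw [not_frequently] at hcon
          have hmem : ((v xh + δ : ℝ) : EReal) ≤ lscEnv (Mop C v) Sbar xh := by
            rw [lscEnv, liminf_eq]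
            exact le_sSup (hcon.mono fun y hy => not_lt.mp hy)
          have h := hmem.trans hB2
          rw [EReal.coe_le_coe_iff] at h
          linarith
        have hex : ∀ n : ℕ, ∃ y, (y ∈ Sbar ∧ dist y xh < 1 / ((n : ℝ) + 1)) ∧
            ∃ d, d ∈ Dset C y ∧ v (Gam C y d) < v xh + δ := by
          intro n
          have hball : ∀ᶠ y in 𝓝[Sbar] xh, y ∈ Sbar ∧ dist y xh < 1 / ((n : ℝ) + 1) := by
            refine eventually_mem_nhdsWithin.and ?_
            refine Eventually.filter_mono nhdsWithin_le_nhds ?_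
            have hb2 := Metric.ball_mem_nhds xh (show (0 : ℝ) < 1 / ((n : ℝ) + 1) by positivity)
            exact eventually_of_mem hb2 fun y hy => Metric.mem_ball.mp hy
          obtain ⟨y, hy1, hy2⟩ := (hfreq.and_eventually hball).exists
          refine ⟨y, hy2, ?_⟩
          rw [Mop] at hy1
          obtain ⟨d, hd⟩ := iInf_lt_iff.mp hy1
          obtain ⟨hdD, hdlt⟩ := iInf_lt_iff.mp hd
          exact ⟨d, hdD, EReal.coe_lt_coe_iff.mp hdlt⟩
        choose y hy dd hdD hdv using hex
        have hyS : ∀ n, y n ∈ Sbar := fun n => (hy n).1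
        have hydist : ∀ n, dist (y n) xh < 1 / ((n : ℝ) + 1) := fun n => (hy n).2
        have hytend : Tendsto y atTop (𝓝 xh) := by
          rw [tendsto_iff_dist_tendsto_zero]
          exact squeeze_zero (fun n => dist_nonneg) (fun n => (hydist n).le)
            tendsto_one_div_add_atTop_nhds_zero_nat
        have hdistc : ∀ n, |(y n).1 - xh.1| ≤ 1 ∧ |(y n).2 - xh.2| ≤ 1 := by
          intro n
          have h1 : dist (y n) xh ≤ 1 := by
            refine (hydist n).le.trans ?_
            rw [div_le_one (by positivity)]
            have : (0 : ℝ) ≤ (n : ℝ) := Nat.cast_nonneg n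
            linarith
          rw [Prod.dist_eq] at h1
          constructor
          · have := (le_max_left (dist (y n).1 xh.1) (dist (y n).2 xh.2)).trans h1
            rwa [Real.dist_eq] at this
          · have := (le_max_right (dist (y n).1 xh.1) (dist (y n).2 xh.2)).trans h1
            rwa [Real.dist_eq] at this
        have hGmem : ∀ n, (0 ≤ (y n).1 - dd n - C (dd n) ∧ 0 ≤ (y n).2 + dd n) := by
          intro n
          have := hdD n
          rw [Dset, mem_setOf_eq, Gam, mem_Sbar] at this
          exact this
        have hd_lb : ∀ n, -(xh.2 + 1) ≤ dd n := by
          intro n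
          have h1 := (hGmem n).2
          have h2 := (hdistc n).2
          rw [abs_le] at h2
          linarith [h2.2]
        have hd_ub : ∀ n, dd n ≤ xh.1 + 1 - C 0 := by
          intro n
          have h1 := (hGmem n).1
          have h2 := (hdistc n).1
          rw [abs_le] at h2
          have h3 : C 0 ≤ C (dd n) := hCmono 0 (dd n) (by simpa using abs_nonneg (dd n))
          linarith [h2.2]
        obtain ⟨dh, hdhmem, σ, hσmono, hdtend⟩ :=
          (isCompact_Icc (a := -(xh.2 + 1)) (b := xh.1 + 1 - C 0)).tendsto_subseq
            (x := dd) (fun n => Set.mem_Icc.mpr ⟨hd_lb n, hd_ub n⟩)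
        have hyσ : Tendsto (fun n => y (σ n)) atTop (𝓝 xh) :=
          hytend.comp hσmono.tendsto_atTop
        have hdσ : Tendsto (fun n => dd (σ n)) atTop (𝓝 dh) := hdtend
        have hCσ : Tendsto (fun n => C (dd (σ n))) atTop (𝓝 (C dh)) :=
          (hCc.tendsto dh).comp hdσ
        have hy1σ : Tendsto (fun n => (y (σ n)).1) atTop (𝓝 xh.1) :=
          (continuous_fst.tendsto xh).comp hyσ
        have hy2σ : Tendsto (fun n => (y (σ n)).2) atTop (𝓝 xh.2) :=
          (continuous_snd.tendsto xh).comp hyσ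
        have hdh1 : 0 ≤ xh.1 - dh - C dh :=
          le_of_tendsto_of_tendsto' tendsto_const_nhds
            ((hy1σ.sub hdσ).sub hCσ) (fun n => (hGmem (σ n)).1)
        have hdh2 : 0 ≤ xh.2 + dh :=
          le_of_tendsto_of_tendsto' tendsto_const_nhds (hy2σ.add hdσ)
            (fun n => (hGmem (σ n)).2)
        have hzS : Gam C xh dh ∈ Sbar := by
          rw [Gam, mem_Sbar]
          exact ⟨hdh1, hdh2⟩
        have hztend : Tendsto (fun n => Gam C (y (σ n)) (dd (σ n))) atTop
            (𝓝 (Gam C xh dh)) := by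
          unfold Gam
          exact Tendsto.prodMk_nhds ((hy1σ.sub hdσ).sub hCσ) (hy2σ.add hdσ)
        have hvz : v (Gam C xh dh) ≤ v xh + δ := by
          refine lsc_seq hv_lsc hzS (fun n => ?_) hztend (fun n => (hdv (σ n)).le)
          have := hdD (σ n)
          rwa [Dset, mem_setOf_eq] at this
        have hC0dh : C 0 ≤ C dh := hCmono 0 dh (by simpa using abs_nonneg dh)
        by_cases hdeg : -xh.2 < b
        · -- nondegenerate : use the key subsolution lemma
          have hkey : u xh ≤ u (Gam C xh dh) :=
            keyU C ⟨hCc, hCmono, hC0, hmono, hrange⟩ u hu_usc xh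
              (hu_sub xh hxhSset).2 b hb hdeg dh (by linarith) (by linarith)
          have hzK : Gam C xh dh ∈ (Sbar ∩ {p : ℝ × ℝ | p.1 + p.2 ≤ x₀.1 + x₀.2}) := by
            refine ⟨hzS, ?_⟩
            simp only [mem_setOf_eq, Gam]
            linarith
          have hmax := hmaxb _ hzK
          simp only [Gam] at hmax hkey hvz
          have h4 : ε * C 0 ≤ ε * C dh := mul_le_mul_of_nonneg_left hC0dh hε.le
          have hexp : ε * ((xh.1 - dh - C dh) + (xh.2 + dh)) =
              ε * (xh.1 + xh.2) - ε * C dh := by ring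
          linarith
        · -- degenerate : the optimal transaction leads to the origin
          push_neg at hdeg
          have hdhb : dh ≤ b := by
            rw [← hmono.le_iff_le]
            show dh + C dh ≤ b + C b
            linarith
          have hz2 : xh.2 + dh = 0 := by
            have h5 : -xh.2 ≤ dh := by linarith
            have h6 : dh ≤ -xh.2 := hdhb.trans hdeg
            linarith
          have hdheq : dh = b := le_antisymm hdhb (by linarith)
          have hz1 : xh.1 - dh - C dh = 0 := by
            rw [hdheq]
            linarith
          have hz0 : Gam C xh dh = ((0 : ℝ), (0 : ℝ)) := by
            rw [Gam, Prod.ext_iff]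
            exact ⟨hz1, hz2⟩
          rw [hz0] at hvz
          have hu00 : u xh ≤ v (0, 0) := hB xh hxhS
          have hψ : xh.1 + xh.2 = C b := by
            have h1 : xh.2 = -dh := by linarith
            rw [h1, ← hb, hdheq]
            ring
          have hCb : C 0 ≤ C b := hCmono 0 b (by simpa using abs_nonneg b)
          have h4 : ε * C 0 ≤ ε * C b := mul_le_mul_of_nonneg_left hCb hε.le
          rw [hψ] at hposc
          linarith
  have hx₀K : x₀ ∈ (Sbar ∩ {p : ℝ × ℝ | p.1 + p.2 ≤ x₀.1 + x₀.2}) :=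
    ⟨hx₀, by simp only [mem_setOf_eq]; exact le_refl _⟩
  have hfin := hmaxb x₀ hx₀K
  linarith

/-- (Proposition: terminal comparison at an intermediate deadline `T_k`.) -/
theorem terminal_comparison_Tk
    (C : ℝ → ℝ) (hC : IsCostFn C)
    (K k : ℕ) (hK : 2 ≤ K) (hk1 : 1 ≤ k) (hkK : k ≤ K - 1)
    (w G : ℕ → ℝ)
    (hw : ∀ i, k ≤ i → i ≤ K → 0 < w i) (hG : ∀ i, k ≤ i → i ≤ K → 0 < G i)
    (p₀ c : ℝ) (hp₀ : 0 < p₀) (hp₁ : p₀ < 1) (hc : 0 < c)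
    (f : ℝ × ℝ → ℝ) (hf_cont : ContinuousOn f Sbar)
    (hf_bdd : ∃ M : ℝ, ∀ x ∈ Sbar, |f x| ≤ M)
    (u v : ℝ × ℝ → ℝ)
    (hu_usc : UpperSemicontinuousOn u Sbar)
    (hv_lsc : LowerSemicontinuousOn v Sbar)
    (hu_sub : ∀ x ∈ Sset,
      u x ≤ sInf {y | ∃ θ : ℝ, 0 ≤ θ ∧ θ ≤ x.1 ∧
        y = w k * max (G k - θ) 0 + f (x.1 - θ, x.2)} ∧
      (u x : EReal) ≤ uscEnv (Mop C u) Sbar x)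
    (hv_super : ∀ x ∈ Sset,
      sInf {y | ∃ θ : ℝ, 0 ≤ θ ∧ θ ≤ x.1 ∧
        y = w k * max (G k - θ) 0 + f (x.1 - θ, x.2)} ≤ v x ∨
      lscEnv (Mop C v) Sbar x ≤ (v x : EReal))
    (hu0 : u (0, 0) ≤ v (0, 0))
    (hv0 : v (0, 0) = ∑ i ∈ Finset.Icc k K, w i * G i)
    (hu_bd : ∀ x ∈ Sbar, 0 ≤ u x ∧ u x ≤ ∑ i ∈ Finset.Icc k K, w i * G i)
    (hv_bd : ∀ x ∈ Sbar,
      -(c * (1 + eunorm x ^ p₀)) ≤ v x ∧ v x ≤ ∑ i ∈ Finset.Icc k K, w i * G i) :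
    ∀ x ∈ Sbar, u x ≤ v x := by
  intro x hx
  have hB' : ∀ z ∈ Sbar, u z ≤ v (0, 0) := by
    intro z hz
    rw [hv0]
    exact (hu_bd z hz).2
  have key : ∀ ε : ℝ, 0 < ε → u x - v x ≤ ε * (x.1 + x.2) := fun ε hε =>
    comparison_eps C hC
      (fun x => sInf {y | ∃ θ : ℝ, 0 ≤ θ ∧ θ ≤ x.1 ∧
        y = w k * max (G k - θ) 0 + f (x.1 - θ, x.2)})
      u v hu_usc hv_lsc hu_sub hv_super hu0 hB' ε hε x hx
  have hxm := mem_Sbar.mp hx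
  have hS : 0 ≤ x.1 + x.2 := add_nonneg hxm.1 hxm.2
  have hmain : ∀ η : ℝ, 0 < η → u x - v x ≤ 0 + η := by
    intro η hη
    have hεp : 0 < η / (x.1 + x.2 + 1) := by positivity
    have h1 := key _ hεp
    have h3 : η / (x.1 + x.2 + 1) * (x.1 + x.2) ≤ η / (x.1 + x.2 + 1) * (x.1 + x.2 + 1) :=
      mul_le_mul_of_nonneg_left (by linarith) hεp.le
    rw [div_mul_cancel₀ η (show x.1 + x.2 + 1 ≠ 0 by linarith)] at h3
    linarith
  have := le_of_forall_pos_le_add hmain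
  linarith
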